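/- Let ρ_AB = ρ_A ⊗ ρ_B be a product density operator on H_A ⊗ H_B. Then H_max(A|B)_ρ = 2 log₂ tr(√ρ_A), i.e., the conditional max-entropy of a product state equals the Rényi entropy of order 1/2 of ρ_A. -/

import Mathlib

open Matrix
open scoped Kronecker ComplexConjugate ComplexOrder

noncomputable section

/-- Partial trace over the first (A) subsystem. -/
def ptraceA {A B : Type*} [Fintype A] (M : Matrix (A × B) (A × B) ℂ) :
    Matrix B B ℂ :=
  Matrix.of fun i j => ∑ a : A, M (a, i) (a, j)

/-- Partial trace over the second (B) subsystem. -/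
def ptraceB {A B : Type*} [Fintype B] (M : Matrix (A × B) (A × B) ℂ) :
    Matrix A A ℂ :=
  Matrix.of fun i j => ∑ b : B, M (i, b) (j, b)

/-- A density operator: positive semidefinite with unit trace. -/
def IsDensity {n : Type*} [Fintype n] (ρ : Matrix n n ℂ) : Prop :=
  ρ.PosSemidef ∧ ρ.trace = 1

/-- Conditional min-entropy `H_min(A|B)_ρ = - inf_σ D_∞(ρ ‖ id_A ⊗ σ)`, where the
infimum ranges over density operators `σ` on `B` and
`D_∞(τ‖τ') = inf {λ | τ ≤ 2^λ τ'}`. -/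
def Hmin {A B : Type*} [Fintype A] [Fintype B] [DecidableEq A] [DecidableEq B]
    (ρ : Matrix (A × B) (A × B) ℂ) : ℝ :=
  - sInf {l : ℝ | ∃ σ : Matrix B B ℂ, IsDensity σ ∧
      (((2 : ℝ) ^ l : ℝ) • ((1 : Matrix A A ℂ) ⊗ₖ σ) - ρ).PosSemidef}

open scoped Classical in
/-- Positive semidefinite square root (junk value `0` off the PSD cone). -/
def psqrt {n : Type*} [Fintype n] [DecidableEq n] (M : Matrix n n ℂ) : Matrix n n ℂ :=
  if h : M.PosSemidef then
    (h.1.eigenvectorUnitary : Matrix n n ℂ) *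
      diagonal ((↑) ∘ Real.sqrt ∘ h.1.eigenvalues) *
      (star h.1.eigenvectorUnitary : Matrix n n ℂ)
  else 0

/-- Trace norm `‖M‖₁ = tr √(Mᴴ M)`. -/
def traceNorm {n : Type*} [Fintype n] [DecidableEq n] (M : Matrix n n ℂ) : ℝ :=
  (psqrt (Mᴴ * M)).trace.re

/-- Fidelity `F(ρ,σ) = ‖√ρ √σ‖₁`. -/
def fidelity {n : Type*} [Fintype n] [DecidableEq n] (ρ σ : Matrix n n ℂ) : ℝ :=
  traceNorm (psqrt ρ * psqrt σ)

/-- Choi matrix of a linear map on matrices. -/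
def choi {B A' : Type*} [Fintype B] [DecidableEq B] [Fintype A']
    (F : Matrix B B ℂ →ₗ[ℂ] Matrix A' A' ℂ) : Matrix (B × A') (B × A') ℂ :=
  Matrix.of fun p q => (F (Matrix.single p.1 q.1 1)) p.2 q.2

/-- A quantum operation (CPTP map): completely positive (PSD Choi matrix, by Choi's
theorem) and trace-preserving. -/
def IsCPTP {B A' : Type*} [Fintype B] [DecidableEq B] [Fintype A']
    (F : Matrix B B ℂ →ₗ[ℂ] Matrix A' A' ℂ) : Prop :=
  (choi F).PosSemidef ∧ ∀ M : Matrix B B ℂ, (F M).trace = M.trace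

/-- The map `id_A ⊗ F` applied to a bipartite operator. -/
def idTensor {A B A' : Type*} [Fintype B]
    (F : Matrix B B ℂ →ₗ[ℂ] Matrix A' A' ℂ) (ρ : Matrix (A × B) (A × B) ℂ) :
    Matrix (A × A') (A × A') ℂ :=
  Matrix.of fun p q => (F (Matrix.of fun b b' => ρ (p.1, b) (q.1, b'))) p.2 q.2

/-- The quadratic form `⟨ψ|M|ψ⟩` (real part). -/
def pureOverlap {n : Type*} [Fintype n] (ψ : n → ℂ) (M : Matrix n n ℂ) : ℝ :=
  (∑ p, ∑ q, conj (ψ p) * M p q * ψ q).re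

/-- The maximally entangled state `|Φ⟩ = d^{-1/2} ∑ₓ |x⟩|x⟩`. -/
def maxEnt (A : Type*) [Fintype A] [DecidableEq A] : A × A → ℂ :=
  fun p => if p.1 = p.2 then ((Real.sqrt (Fintype.card A))⁻¹ : ℝ) else 0

/-- `q_corr(A|B)_ρ`: `d_A` times the maximal squared fidelity with the maximally
entangled state achievable by quantum operations on `B`. -/
def qcorr {A B : Type*} [Fintype A] [Fintype B] [DecidableEq A] [DecidableEq B]
    (ρ : Matrix (A × B) (A × B) ℂ) : ℝ :=
  (Fintype.card A : ℝ) *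
    sSup {x : ℝ | ∃ F : Matrix B B ℂ →ₗ[ℂ] Matrix A A ℂ, IsCPTP F ∧
      x = pureOverlap (maxEnt A) (idTensor F ρ)}

/-- The completely mixed state. -/
def mixed (A : Type*) [Fintype A] [DecidableEq A] : Matrix A A ℂ :=
  ((Fintype.card A : ℂ)⁻¹) • (1 : Matrix A A ℂ)

/-- `q_decpl(A|B)_ρ`: `d_A` times the maximal squared fidelity with `τ_A ⊗ σ_B`. -/
def qdecpl {A B : Type*} [Fintype A] [Fintype B] [DecidableEq A] [DecidableEq B]
    (ρ : Matrix (A × B) (A × B) ℂ) : ℝ :=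
  (Fintype.card A : ℝ) *
    sSup {x : ℝ | ∃ σ : Matrix B B ℂ, IsDensity σ ∧
      x = (fidelity ρ ((mixed A) ⊗ₖ σ)) ^ 2}

/-- Reduced state `tr_C |ψ⟩⟨ψ|` of a pure state `ψ` on `(A ⊗ B) ⊗ C`. -/
def redL {S C : Type*} [Fintype C] (ψ : S × C → ℂ) : Matrix S S ℂ :=
  Matrix.of fun s s' => ∑ c, ψ (s, c) * conj (ψ (s', c))

/-- Reduced state `tr_B |ψ⟩⟨ψ|` on `A ⊗ C` of a pure state `ψ` on `(A ⊗ B) ⊗ C`. -/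
def redAC {A B C : Type*} [Fintype B] (ψ : (A × B) × C → ℂ) :
    Matrix (A × C) (A × C) ℂ :=
  Matrix.of fun p q => ∑ b, ψ ((p.1, b), p.2) * conj (ψ ((q.1, b), q.2))




/-! ### Auxiliary lemmas for `stmt16` -/

private lemma normSq_eq_norm_sq' (z : ℂ) : Complex.normSq z = ‖z‖ ^ 2 := by
  rw [← Complex.sq_norm]

private lemma cs_basic {ι : Type*} [Fintype ι] (u g : ι → ℂ) :
    Complex.normSq (∑ i, u i * g i)
      ≤ (∑ i, Complex.normSq (u i)) * ∑ i, Complex.normSq (g i) := by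
  have h1 : ‖∑ i, u i * g i‖ ≤ ∑ i, ‖u i‖ * ‖g i‖ := by
    refine (norm_sum_le _ _).trans ?_
    exact le_of_eq (Finset.sum_congr rfl fun i _ => norm_mul _ _)
  have h2 := Finset.sum_mul_sq_le_sq_mul_sq Finset.univ (fun i => ‖u i‖) (fun i => ‖g i‖)
  rw [normSq_eq_norm_sq']
  calc ‖∑ i, u i * g i‖ ^ 2 ≤ (∑ i, ‖u i‖ * ‖g i‖) ^ 2 := by
        apply pow_le_pow_left₀ (norm_nonneg _) h1
    _ ≤ (∑ i, ‖u i‖ ^ 2) * ∑ i, ‖g i‖ ^ 2 := h2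
    _ = _ := by
        congr 1 <;> exact Finset.sum_congr rfl fun i _ => (normSq_eq_norm_sq' _).symm

private lemma weighted_cs {ι : Type*} [Fintype ι] (w : ι → ℝ) (z : ι → ℂ) (hw : ∀ i, 0 ≤ w i)
    (hz : ∀ i, w i = 0 → z i = 0) :
    Complex.normSq (∑ i, z i)
      ≤ (∑ i, Real.sqrt (w i)) * ∑ i, (Real.sqrt (w i))⁻¹ * Complex.normSq (z i) := by
  have h1 : ‖∑ i, z i‖ ≤ ∑ i, ‖z i‖ := norm_sum_le _ _
  have key := Finset.sum_mul_sq_le_sq_mul_sq Finset.univ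
    (fun i => Real.sqrt (Real.sqrt (w i)))
    (fun i => (Real.sqrt (Real.sqrt (w i)))⁻¹ * ‖z i‖)
  have hfg : ∀ i, Real.sqrt (Real.sqrt (w i)) * ((Real.sqrt (Real.sqrt (w i)))⁻¹ * ‖z i‖)
      = ‖z i‖ := by
    intro i
    rcases eq_or_ne (w i) 0 with h | h
    · rw [hz i h]; simp
    · have hw' : 0 < w i := (hw i).lt_of_ne (Ne.symm h)
      have h4 : Real.sqrt (Real.sqrt (w i)) ≠ 0 := by positivity
      field_simp
  have hf2 : ∀ i, Real.sqrt (Real.sqrt (w i)) ^ 2 = Real.sqrt (w i) := fun i =>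
    Real.sq_sqrt (Real.sqrt_nonneg _)
  have hg2 : ∀ i, ((Real.sqrt (Real.sqrt (w i)))⁻¹ * ‖z i‖) ^ 2
      = (Real.sqrt (w i))⁻¹ * Complex.normSq (z i) := by
    intro i
    rw [mul_pow, inv_pow, hf2 i, normSq_eq_norm_sq']
  simp only [hfg, hf2, hg2] at key
  rw [normSq_eq_norm_sq']
  calc ‖∑ i, z i‖ ^ 2 ≤ (∑ i, ‖z i‖) ^ 2 := by
        apply pow_le_pow_left₀ (norm_nonneg _) h1
    _ ≤ _ := key

private lemma bessel {ι n : Type*} [Fintype ι] [Fintype n] [DecidableEq ι] (w : ι → n → ℂ)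
    (s : ι → ℝ) (hs : ∀ i, s i ≤ 1)
    (hGram : ∀ i j, ∑ γ, w i γ * conj (w j γ) = if i = j then (s i : ℂ) else 0)
    (z : n → ℂ) :
    ∑ i, Complex.normSq (∑ γ, conj (w i γ) * z γ) ≤ ∑ γ, Complex.normSq (z γ) := by
  set c : ι → ℂ := fun i => ∑ γ, conj (w i γ) * z γ with hc
  set r : n → ℂ := fun γ => z γ - ∑ i, c i * w i γ with hr
  have hconj_c : ∀ i, conj (c i) = ∑ γ, w i γ * conj (z γ) := by
    intro i
    rw [hc, map_sum]
    exact Finset.sum_congr rfl fun γ _ => by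
      rw [_root_.map_mul, Complex.conj_conj]
  have hT1 : ∑ γ, z γ * conj (z γ) = ((∑ γ, Complex.normSq (z γ) : ℝ) : ℂ) := by
    push_cast
    exact Finset.sum_congr rfl fun γ _ => Complex.mul_conj _
  have hT2 : ∑ γ, (z γ * ∑ j, conj (c j) * conj (w j γ))
      = ((∑ j, Complex.normSq (c j) : ℝ) : ℂ) := by
    calc ∑ γ, (z γ * ∑ j, conj (c j) * conj (w j γ))
        = ∑ γ, ∑ j, conj (c j) * (conj (w j γ) * z γ) := by
          refine Finset.sum_congr rfl fun γ _ => ?_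
          rw [Finset.mul_sum]
          exact Finset.sum_congr rfl fun j _ => by ring
      _ = ∑ j, ∑ γ, conj (c j) * (conj (w j γ) * z γ) := Finset.sum_comm
      _ = ∑ j, conj (c j) * c j := by
          refine Finset.sum_congr rfl fun j _ => ?_
          rw [hc, Finset.mul_sum]
      _ = _ := by
          push_cast
          exact Finset.sum_congr rfl fun j _ => by
            rw [mul_comm, Complex.mul_conj]
  have hT3 : ∑ γ, ((∑ i, c i * w i γ) * conj (z γ))
      = ((∑ i, Complex.normSq (c i) : ℝ) : ℂ) := by
    calc ∑ γ, ((∑ i, c i * w i γ) * conj (z γ))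
        = ∑ γ, ∑ i, c i * (w i γ * conj (z γ)) := by
          refine Finset.sum_congr rfl fun γ _ => ?_
          rw [Finset.sum_mul]
          exact Finset.sum_congr rfl fun i _ => by ring
      _ = ∑ i, ∑ γ, c i * (w i γ * conj (z γ)) := Finset.sum_comm
      _ = ∑ i, c i * conj (c i) := by
          refine Finset.sum_congr rfl fun i _ => ?_
          rw [hconj_c, Finset.mul_sum]
      _ = _ := by
          push_cast
          exact Finset.sum_congr rfl fun i _ => Complex.mul_conj _
  have hT4 : ∑ γ, ((∑ i, c i * w i γ) * (∑ j, conj (c j) * conj (w j γ)))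
      = ∑ i, ((s i * Complex.normSq (c i) : ℝ) : ℂ) := by
    calc ∑ γ, ((∑ i, c i * w i γ) * (∑ j, conj (c j) * conj (w j γ)))
        = ∑ γ, ∑ i, ∑ j, (c i * conj (c j)) * (w i γ * conj (w j γ)) := by
          refine Finset.sum_congr rfl fun γ _ => ?_
          rw [Finset.sum_mul_sum]
          exact Finset.sum_congr rfl fun i _ => Finset.sum_congr rfl fun j _ => by ring
      _ = ∑ i, ∑ j, ∑ γ, (c i * conj (c j)) * (w i γ * conj (w j γ)) := by
          rw [Finset.sum_comm]
          exact Finset.sum_congr rfl fun i _ => Finset.sum_comm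
      _ = ∑ i, ∑ j, (c i * conj (c j)) * (if i = j then (s i : ℂ) else 0) := by
          refine Finset.sum_congr rfl fun i _ => Finset.sum_congr rfl fun j _ => ?_
          rw [← Finset.mul_sum, hGram]
      _ = ∑ i, (c i * conj (c i)) * (s i : ℂ) := by
          refine Finset.sum_congr rfl fun i _ => ?_
          rw [Finset.sum_eq_single i]
          · simp
          · intro j _ hj; simp [Ne.symm hj]
          · intro h; exact absurd (Finset.mem_univ i) h
      _ = _ := by
          refine Finset.sum_congr rfl fun i _ => ?_
          rw [Complex.mul_conj]
          push_cast
          ring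
  have hE : ((∑ γ, Complex.normSq (r γ) : ℝ) : ℂ)
      = ((∑ γ, Complex.normSq (z γ) : ℝ) : ℂ) - ((∑ i, Complex.normSq (c i) : ℝ) : ℂ)
        - ((∑ i, Complex.normSq (c i) : ℝ) : ℂ)
        + ∑ i, ((s i * Complex.normSq (c i) : ℝ) : ℂ) := by
    have e1 : ((∑ γ, Complex.normSq (r γ) : ℝ) : ℂ) = ∑ γ, r γ * conj (r γ) := by
      push_cast
      exact Finset.sum_congr rfl fun γ _ => (Complex.mul_conj _).symm
    have hconj_r : ∀ γ, conj (r γ) = conj (z γ) - ∑ j, conj (c j) * conj (w j γ) := by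
      intro γ
      rw [hr]
      simp only [map_sub, map_sum, _root_.map_mul]
    rw [e1]
    have e2 : ∀ γ, r γ * conj (r γ)
        = z γ * conj (z γ) - (z γ * ∑ j, conj (c j) * conj (w j γ))
          - ((∑ i, c i * w i γ) * conj (z γ))
          + ((∑ i, c i * w i γ) * (∑ j, conj (c j) * conj (w j γ))) := by
      intro γ
      rw [hconj_r, hr]
      ring
    simp_rw [e2]
    rw [Finset.sum_add_distrib, Finset.sum_sub_distrib, Finset.sum_sub_distrib,
      hT1, hT2, hT3, hT4]
  have hEre : (∑ γ, Complex.normSq (r γ))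
      = (∑ γ, Complex.normSq (z γ)) - (∑ i, Complex.normSq (c i))
        - (∑ i, Complex.normSq (c i)) + ∑ i, s i * Complex.normSq (c i) := by
    have h := hE
    rw [← Complex.ofReal_sum Finset.univ (fun i => s i * Complex.normSq (c i))] at h
    push_cast at h
    exact_mod_cast h
  have h0 : 0 ≤ ∑ γ, Complex.normSq (r γ) :=
    Finset.sum_nonneg fun γ _ => Complex.normSq_nonneg _
  have hle : ∑ i, s i * Complex.normSq (c i) ≤ ∑ i, Complex.normSq (c i) := by
    refine Finset.sum_le_sum fun i _ => ?_
    nlinarith [Complex.normSq_nonneg (c i), hs i]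
  linarith [hEre ▸ h0]

private lemma quad_gram_w {n ι : Type*} [Fintype n] [Fintype ι] (v : ι → n → ℂ) (wt : ι → ℝ)
    (x : n → ℂ) :
    ∑ i, ∑ j, conj (x i) * (∑ k, (wt k : ℂ) * (v k i * conj (v k j))) * x j
      = ∑ k, ((wt k * Complex.normSq (∑ i, conj (x i) * v k i) : ℝ) : ℂ) := by
  have key : ∀ k : ι, ((wt k * Complex.normSq (∑ i, conj (x i) * v k i) : ℝ) : ℂ)
      = (wt k : ℂ) * ((∑ i, conj (x i) * v k i) * ∑ j, conj (v k j) * x j) := by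
    intro k
    have h2 : (∑ j, conj (v k j) * x j) = conj (∑ i, conj (x i) * v k i) := by
      rw [map_sum]
      exact Finset.sum_congr rfl fun j _ => by
        rw [_root_.map_mul, Complex.conj_conj]; ring
    rw [h2, Complex.mul_conj]
    push_cast
    ring
  have swap : ∀ (f : n → n → ι → ℂ), ∑ i, ∑ j, ∑ k, f i j k = ∑ k, ∑ i, ∑ j, f i j k := by
    intro f
    have h1 : ∀ i : n, ∑ j, ∑ k, f i j k = ∑ k, ∑ j, f i j k := fun i => Finset.sum_comm
    simp_rw [h1]
    exact Finset.sum_comm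
  calc ∑ i, ∑ j, conj (x i) * (∑ k, (wt k : ℂ) * (v k i * conj (v k j))) * x j
      = ∑ i, ∑ j, ∑ k, conj (x i) * ((wt k : ℂ) * (v k i * conj (v k j))) * x j := by
        simp_rw [Finset.mul_sum, Finset.sum_mul]
    _ = ∑ k, ∑ i, ∑ j, conj (x i) * ((wt k : ℂ) * (v k i * conj (v k j))) * x j := swap _
    _ = ∑ k, (wt k : ℂ) * ((∑ i, conj (x i) * v k i) * ∑ j, conj (v k j) * x j) := by
        refine Finset.sum_congr rfl fun k _ => ?_
        rw [Finset.sum_mul_sum]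
        simp_rw [Finset.mul_sum]
        exact Finset.sum_congr rfl fun i _ => Finset.sum_congr rfl fun j _ => by ring
    _ = _ := by simp_rw [key]

private lemma quad_expand {n : Type*} [Fintype n] (M : Matrix n n ℂ) (x : n → ℂ) :
    star x ⬝ᵥ (M *ᵥ x) = ∑ i, ∑ j, conj (x i) * M i j * x j := by
  simp only [dotProduct, mulVec, Pi.star_apply, Complex.star_def, Finset.mul_sum]
  exact Finset.sum_congr rfl fun i _ => Finset.sum_congr rfl fun j _ => by ring

private lemma quad_one_kron {A C : Type*} [Fintype A] [Fintype C] [DecidableEq A]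
    (σ : Matrix C C ℂ) (x : A × C → ℂ) :
    star x ⬝ᵥ (((1 : Matrix A A ℂ) ⊗ₖ σ) *ᵥ x)
      = ∑ α, ∑ γ, ∑ γ', conj (x (α, γ)) * σ γ γ' * x (α, γ') := by
  rw [quad_expand, Fintype.sum_prod_type]
  refine Finset.sum_congr rfl fun α _ => Finset.sum_congr rfl fun γ _ => ?_
  rw [Fintype.sum_prod_type]
  rw [Finset.sum_eq_single α]
  · refine Finset.sum_congr rfl fun γ' _ => ?_
    simp [Matrix.one_apply]
  · intro α' _ hα'
    apply Finset.sum_eq_zero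
    intro γ' _
    simp [Matrix.one_apply, (Ne.symm hα')]
  · intro h; exact absurd (Finset.mem_univ α) h

private lemma inv_sqrt_mul_self' {x : ℝ} : (Real.sqrt x)⁻¹ * x = Real.sqrt x := by
  rw [inv_mul_eq_div, Real.div_sqrt]

private lemma inv_sqrt_mul_inv_sqrt_mul' {x : ℝ} : (Real.sqrt x)⁻¹ * ((Real.sqrt x)⁻¹ * x)
    = if x ≤ 0 then 0 else 1 := by
  rcases le_or_gt x 0 with h | h
  · rcases lt_or_eq_of_le h with h' | h'
    · simp [if_pos h, Real.sqrt_eq_zero_of_nonpos h'.le, h'.ne]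
    · rw [if_pos h, h']; simp
  · rw [inv_sqrt_mul_self', inv_mul_cancel₀ (Real.sqrt_pos.mpr h).ne', if_neg (not_le.mpr h)]

private lemma sum_gram_pair {κ n : Type*} [Fintype κ] [Fintype n] (f g : κ → ℂ)
    (Ψ : κ → n → ℂ) :
    ∑ γ, (∑ k, f k * Ψ k γ) * (∑ m, g m * conj (Ψ m γ))
      = ∑ k, ∑ m, f k * g m * (∑ γ, Ψ k γ * conj (Ψ m γ)) := by
  have step : ∀ γ, (∑ k, f k * Ψ k γ) * (∑ m, g m * conj (Ψ m γ))
      = ∑ k, ∑ m, f k * g m * (Ψ k γ * conj (Ψ m γ)) := by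
    intro γ
    rw [Finset.sum_mul_sum]
    exact Finset.sum_congr rfl fun k _ => Finset.sum_congr rfl fun m _ => by ring
  simp_rw [step]
  rw [Finset.sum_comm]
  refine Finset.sum_congr rfl fun k _ => ?_
  rw [Finset.sum_comm]
  refine Finset.sum_congr rfl fun m _ => ?_
  rw [← Finset.mul_sum]

private lemma factor_four {A B : Type*} [Fintype A] [Fintype B] (F : A → A → ℂ)
    (G : B → B → ℂ) :
    ∑ α, ∑ β, ∑ α', ∑ β', F α α' * G β β'
      = (∑ α, ∑ α', F α α') * (∑ β, ∑ β', G β β') := by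
  rw [Finset.sum_mul_sum]
  refine Finset.sum_congr rfl fun α _ => Finset.sum_congr rfl fun β _ => ?_
  rw [Finset.sum_mul_sum]

private lemma gram_c {A B C : Type*} [Fintype A] [Fintype B] [Fintype C]
    [DecidableEq A] [DecidableEq B]
    (ψ : (A × B) × C → ℂ) (ρA : Matrix A A ℂ) (ρB : Matrix B B ℂ)
    (U : Matrix A A ℂ) (V : Matrix B B ℂ) (p : A → ℝ) (q : B → ℝ)
    (hψ : redL ψ = ρA ⊗ₖ ρB)
    (hdAe : ∀ a a', ∑ α, ∑ α', conj (U α a) * ρA α α' * U α' a'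
      = if a = a' then (p a : ℂ) else 0)
    (hdBe : ∀ b b', ∑ β, ∑ β', conj (V β b) * ρB β β' * V β' b'
      = if b = b' then (q b : ℂ) else 0)
    (a : A) (b : B) (a' : A) (b' : B) :
    ∑ γ, (∑ α, ∑ β, conj (U α a) * conj (V β b) * ψ ((α, β), γ))
        * conj (∑ α, ∑ β, conj (U α a') * conj (V β b') * ψ ((α, β), γ))
      = (if a = a' then (p a : ℂ) else 0) * (if b = b' then (q b : ℂ) else 0) := by
  have hψred : ∀ (k m : A × B), ∑ γ, ψ (k, γ) * conj (ψ (m, γ)) = ρA k.1 m.1 * ρB k.2 m.2 := by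
    intro k m
    exact congrFun (congrFun hψ k) m
  have h1 : ∀ (x : A) (y : B) (γ : C), (∑ α, ∑ β, conj (U α x) * conj (V β y) * ψ ((α, β), γ))
      = ∑ k : A × B, (conj (U k.1 x) * conj (V k.2 y)) * ψ (k, γ) := by
    intro x y γ; rw [Fintype.sum_prod_type]
  have h2 : ∀ γ, conj (∑ α, ∑ β, conj (U α a') * conj (V β b') * ψ ((α, β), γ))
      = ∑ m : A × B, (U m.1 a' * V m.2 b') * conj (ψ (m, γ)) := by
    intro γ
    rw [h1, map_sum]
    refine Finset.sum_congr rfl fun m _ => ?_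
    simp only [_root_.map_mul, Complex.conj_conj]
  calc ∑ γ, (∑ α, ∑ β, conj (U α a) * conj (V β b) * ψ ((α, β), γ))
        * conj (∑ α, ∑ β, conj (U α a') * conj (V β b') * ψ ((α, β), γ))
      = ∑ γ, (∑ k : A × B, (conj (U k.1 a) * conj (V k.2 b)) * ψ (k, γ))
          * (∑ m : A × B, (U m.1 a' * V m.2 b') * conj (ψ (m, γ))) := by
        simp_rw [h2, h1]
    _ = ∑ k : A × B, ∑ m : A × B, (conj (U k.1 a) * conj (V k.2 b)) * (U m.1 a' * V m.2 b')
          * (∑ γ, ψ (k, γ) * conj (ψ (m, γ))) :=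
        sum_gram_pair _ _ _
    _ = ∑ k : A × B, ∑ m : A × B, (conj (U k.1 a) * conj (V k.2 b)) * (U m.1 a' * V m.2 b')
          * (ρA k.1 m.1 * ρB k.2 m.2) := by
        simp_rw [hψred]
    _ = ∑ α, ∑ β, ∑ α', ∑ β', (conj (U α a) * ρA α α' * U α' a')
          * (conj (V β b) * ρB β β' * V β' b') := by
        rw [Fintype.sum_prod_type]
        refine Finset.sum_congr rfl fun α _ => Finset.sum_congr rfl fun β _ => ?_
        rw [Fintype.sum_prod_type]
        exact Finset.sum_congr rfl fun α' _ => Finset.sum_congr rfl fun β' _ => by ring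
    _ = (∑ α, ∑ α', conj (U α a) * ρA α α' * U α' a')
          * (∑ β, ∑ β', conj (V β b) * ρB β β' * V β' b') :=
        factor_four _ _
    _ = _ := by rw [hdAe, hdBe]

private lemma quad_redAC {A B C : Type*} [Fintype A] [Fintype B] [Fintype C]
    [DecidableEq A] [DecidableEq B]
    (ψ : (A × B) × C → ℂ) (U : Matrix A A ℂ) (V : Matrix B B ℂ) (c : A → B → C → ℂ)
    (hRowU : ∀ α α', ∑ a, U α a * conj (U α' a) = if α = α' then (1 : ℂ) else 0)
    (hRowV : ∀ β β', ∑ b, V β b * conj (V β' b) = if β = β' then (1 : ℂ) else 0)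
    (hcdef : ∀ a b γ, c a b γ = ∑ α, ∑ β, conj (U α a) * conj (V β b) * ψ ((α, β), γ))
    (x : A × C → ℂ) :
    star x ⬝ᵥ (redAC ψ *ᵥ x)
      = ∑ b, ((Complex.normSq (∑ a, ∑ i : A × C, conj (x i) * (U i.1 a * c a b i.2)) : ℝ) : ℂ) := by
  set D : B → ℂ := fun β => ∑ i : A × C, conj (x i) * ψ ((i.1, β), i.2) with hD
  have step1 : star x ⬝ᵥ (redAC ψ *ᵥ x) = ∑ b, ((Complex.normSq (D b) : ℝ) : ℂ) := by
    rw [quad_expand]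
    have hentry : ∀ i j : A × C, redAC ψ i j
        = ∑ b, ((1 : ℝ) : ℂ) * (ψ ((i.1, b), i.2) * conj (ψ ((j.1, b), j.2))) := by
      intro i j
      simp [redAC]
    simp_rw [hentry]
    rw [quad_gram_w (fun b i => ψ ((i.1, b), i.2)) (fun _ => (1 : ℝ)) x]
    simp [hD]
  have step2 : ∀ (α : A) (γ : C) (b : B),
      ∑ a, U α a * c a b γ = ∑ β, conj (V β b) * ψ ((α, β), γ) := by
    intro α γ b
    simp_rw [hcdef]
    calc ∑ a, U α a * (∑ α', ∑ β, conj (U α' a) * conj (V β b) * ψ ((α', β), γ))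
        = ∑ a, ∑ α', ∑ β, (U α a * conj (U α' a)) * (conj (V β b) * ψ ((α', β), γ)) := by
          refine Finset.sum_congr rfl fun a _ => ?_
          rw [Finset.mul_sum]
          refine Finset.sum_congr rfl fun α' _ => ?_
          rw [Finset.mul_sum]
          exact Finset.sum_congr rfl fun β _ => by ring
      _ = ∑ α', ∑ β, (∑ a, U α a * conj (U α' a)) * (conj (V β b) * ψ ((α', β), γ)) := by
          rw [Finset.sum_comm]
          refine Finset.sum_congr rfl fun α' _ => ?_
          rw [Finset.sum_comm]
          exact Finset.sum_congr rfl fun β _ => (Finset.sum_mul _ _ _).symm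
      _ = ∑ β, conj (V β b) * ψ ((α, β), γ) := by
          rw [Finset.sum_eq_single α]
          · rw [hRowU]
            simp
          · intro α' _ hα'
            rw [hRowU, if_neg (Ne.symm hα')]
            apply Finset.sum_eq_zero
            intro β _
            ring
          · intro h; exact absurd (Finset.mem_univ α) h
  have step3 : ∀ b, (∑ a, ∑ i : A × C, conj (x i) * (U i.1 a * c a b i.2))
      = ∑ β, conj (V β b) * D β := by
    intro b
    rw [Finset.sum_comm]
    calc ∑ i : A × C, ∑ a, conj (x i) * (U i.1 a * c a b i.2)
        = ∑ i : A × C, conj (x i) * ∑ a, U i.1 a * c a b i.2 := by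
          refine Finset.sum_congr rfl fun i _ => ?_
          rw [Finset.mul_sum]
      _ = ∑ i : A × C, ∑ β, conj (x i) * (conj (V β b) * ψ ((i.1, β), i.2)) := by
          refine Finset.sum_congr rfl fun i _ => ?_
          rw [step2, Finset.mul_sum]
      _ = ∑ β, conj (V β b) * D β := by
          rw [Finset.sum_comm]
          refine Finset.sum_congr rfl fun β _ => ?_
          rw [hD, Finset.mul_sum]
          exact Finset.sum_congr rfl fun i _ => by ring
  have step4 : ∑ b, ((Complex.normSq (∑ β, conj (V β b) * D β) : ℝ) : ℂ)
      = ∑ b, ((Complex.normSq (D b) : ℝ) : ℂ) := by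
    have lhs_eq : ∀ b, ((Complex.normSq (∑ β, conj (V β b) * D β) : ℝ) : ℂ)
        = (∑ β, D β * conj (V β b)) * (∑ β', conj (D β') * conj (conj (V β' b))) := by
      intro b
      rw [← Complex.mul_conj]
      congr 1
      · exact Finset.sum_congr rfl fun β _ => by ring
      · rw [map_sum]
        exact Finset.sum_congr rfl fun β' _ => by
          rw [_root_.map_mul]
          ring
    simp_rw [lhs_eq]
    rw [sum_gram_pair (fun β => D β) (fun β' => conj (D β')) (fun β b => conj (V β b))]
    calc ∑ β, ∑ β', D β * conj (D β') * (∑ b, conj (V β b) * conj (conj (V β' b)))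
        = ∑ β, ∑ β', D β * conj (D β') * (if β' = β then (1 : ℂ) else 0) := by
          refine Finset.sum_congr rfl fun β _ => Finset.sum_congr rfl fun β' _ => ?_
          congr 1
          rw [← hRowV β' β]
          exact Finset.sum_congr rfl fun b _ => by rw [Complex.conj_conj]; ring
      _ = ∑ β, D β * conj (D β) := by
          refine Finset.sum_congr rfl fun β _ => ?_
          rw [Finset.sum_eq_single β]
          · simp
          · intro β' _ hβ'; simp [hβ']
          · intro h; exact absurd (Finset.mem_univ β) h
      _ = _ := by
          push_cast
          exact Finset.sum_congr rfl fun β _ => Complex.mul_conj _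
  rw [step1]
  simp_rw [step3]
  rw [step4]


/-- for a product state `ρ_AB = ρ_A ⊗ ρ_B`,
`H_max(A|B)_ρ = 2 log₂ tr √ρ_A`, where `H_max(A|B) = -H_min(A|C)` is evaluated on any
purification `ψ` of `ρ_A ⊗ ρ_B`. -/
theorem stmt16 {A B : Type*} [Fintype A] [Fintype B] [DecidableEq A] [DecidableEq B]
    (ρA : Matrix A A ℂ) (hA : IsDensity ρA)
    (ρB : Matrix B B ℂ) (hB : IsDensity ρB)
    {C : Type*} [Fintype C] [DecidableEq C]
    (ψ : (A × B) × C → ℂ) (hψ : redL ψ = ρA ⊗ₖ ρB) :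
    -(Hmin (redAC ψ)) = 2 * Real.logb 2 ((psqrt ρA).trace.re) := by
  classical
  obtain ⟨hA1, hAtr⟩ := hA
  obtain ⟨hB1, hBtr⟩ := hB
  set p : A → ℝ := hA1.1.eigenvalues with hp
  set q : B → ℝ := hB1.1.eigenvalues with hq
  set U : Matrix A A ℂ := (hA1.1.eigenvectorUnitary : Matrix A A ℂ) with hUdef
  set V : Matrix B B ℂ := (hB1.1.eigenvectorUnitary : Matrix B B ℂ) with hVdef
  have hpnn : ∀ a, 0 ≤ p a := fun a => hA1.eigenvalues_nonneg a
  have hqnn : ∀ b, 0 ≤ q b := fun b => hB1.eigenvalues_nonneg b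
  have hUU : Uᴴ * U = 1 := by
    have h := hA1.1.eigenvectorUnitary.2
    rw [Matrix.mem_unitaryGroup_iff'] at h
    rw [← Matrix.star_eq_conjTranspose]
    exact h
  have hUUc : U * Uᴴ = 1 := by
    have h := hA1.1.eigenvectorUnitary.2
    rw [Matrix.mem_unitaryGroup_iff] at h
    rw [← Matrix.star_eq_conjTranspose]
    exact h
  have hVVc : V * Vᴴ = 1 := by
    have h := hB1.1.eigenvectorUnitary.2
    rw [Matrix.mem_unitaryGroup_iff] at h
    rw [← Matrix.star_eq_conjTranspose]
    exact h
  have hGramU : ∀ a a', ∑ α, conj (U α a) * U α a' = if a = a' then (1 : ℂ) else 0 := by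
    intro a a'
    have h := congrFun (congrFun hUU a) a'
    simpa [Matrix.mul_apply, Matrix.conjTranspose_apply, Matrix.one_apply] using h
  have hRowU : ∀ α α', ∑ a, U α a * conj (U α' a) = if α = α' then (1 : ℂ) else 0 := by
    intro α α'
    have h := congrFun (congrFun hUUc α) α'
    simpa [Matrix.mul_apply, Matrix.conjTranspose_apply, Matrix.one_apply] using h
  have hRowV : ∀ β β', ∑ b, V β b * conj (V β' b) = if β = β' then (1 : ℂ) else 0 := by
    intro β β'
    have h := congrFun (congrFun hVVc β) β'
    simpa [Matrix.mul_apply, Matrix.conjTranspose_apply, Matrix.one_apply] using h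
  have hdA : Uᴴ * ρA * U = Matrix.diagonal (fun a => (p a : ℂ)) := by
    have h := hA1.1.conjStarAlgAut_star_eigenvectorUnitary
    rw [Unitary.conjStarAlgAut_star_apply, Matrix.star_eq_conjTranspose] at h
    exact h
  have hdB : Vᴴ * ρB * V = Matrix.diagonal (fun b => (q b : ℂ)) := by
    have h := hB1.1.conjStarAlgAut_star_eigenvectorUnitary
    rw [Unitary.conjStarAlgAut_star_apply, Matrix.star_eq_conjTranspose] at h
    exact h
  have hdAe : ∀ a a', ∑ α, ∑ α', conj (U α a) * ρA α α' * U α' a'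
      = if a = a' then (p a : ℂ) else 0 := by
    intro a a'
    have h := congrFun (congrFun hdA a) a'
    rw [Matrix.diagonal_apply] at h
    rw [← h, Matrix.mul_apply]
    simp_rw [Matrix.mul_apply, Matrix.conjTranspose_apply, Finset.sum_mul]
    rw [Finset.sum_comm]
    refine Finset.sum_congr rfl fun α _ => Finset.sum_congr rfl fun α' _ => ?_
    rw [Complex.star_def]
  have hdBe : ∀ b b', ∑ β, ∑ β', conj (V β b) * ρB β β' * V β' b'
      = if b = b' then (q b : ℂ) else 0 := by
    intro b b'
    have h := congrFun (congrFun hdB b) b'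
    rw [Matrix.diagonal_apply] at h
    rw [← h, Matrix.mul_apply]
    simp_rw [Matrix.mul_apply, Matrix.conjTranspose_apply, Finset.sum_mul]
    rw [Finset.sum_comm]
    refine Finset.sum_congr rfl fun β _ => Finset.sum_congr rfl fun β' _ => ?_
    rw [Complex.star_def]
  have htrA : ∑ a, p a = 1 := by
    have h1 : (ρA).trace = Matrix.trace (Matrix.diagonal (fun a => (p a : ℂ))) := by
      rw [← hdA, Matrix.trace_mul_cycle, hUUc, Matrix.one_mul]
    rw [hAtr, Matrix.trace_diagonal] at h1
    have h2 : ((1 : ℝ) : ℂ) = ((∑ a, p a : ℝ) : ℂ) := by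
      push_cast; exact h1
    exact_mod_cast h2.symm
  have htrB : ∑ b, q b = 1 := by
    have h1 : (ρB).trace = Matrix.trace (Matrix.diagonal (fun b => (q b : ℂ))) := by
      rw [← hdB, Matrix.trace_mul_cycle, hVVc, Matrix.one_mul]
    rw [hBtr, Matrix.trace_diagonal] at h1
    have h2 : ((1 : ℝ) : ℂ) = ((∑ b, q b : ℝ) : ℂ) := by
      push_cast; exact h1
    exact_mod_cast h2.symm
  set t : ℝ := ∑ a, Real.sqrt (p a) with htdef
  have htpos : 0 < t := by
    have hex : ∃ a, p a ≠ 0 := by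
      by_contra h
      push_neg at h
      rw [Finset.sum_eq_zero (fun a _ => h a)] at htrA
      norm_num at htrA
    obtain ⟨a, ha⟩ := hex
    have h1 : 0 < Real.sqrt (p a) := Real.sqrt_pos.mpr ((hpnn a).lt_of_ne (Ne.symm ha))
    have h2 : Real.sqrt (p a) ≤ t := by
      rw [htdef]
      exact Finset.single_le_sum (fun a' _ => Real.sqrt_nonneg (p a')) (Finset.mem_univ a)
    linarith
  have htr_sqrt : (psqrt ρA).trace.re = t := by
    have h0 : psqrt ρA = (hA1.1.eigenvectorUnitary : Matrix A A ℂ) *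
        diagonal ((↑) ∘ Real.sqrt ∘ hA1.1.eigenvalues) *
        (star hA1.1.eigenvectorUnitary : Matrix A A ℂ) := by
      unfold psqrt
      rw [dif_pos hA1]
    have h1 : Matrix.trace ((hA1.1.eigenvectorUnitary : Matrix A A ℂ) *
        diagonal ((↑) ∘ Real.sqrt ∘ hA1.1.eigenvalues) *
        (star hA1.1.eigenvectorUnitary : Matrix A A ℂ))
        = Matrix.trace (Matrix.diagonal ((RCLike.ofReal : ℝ → ℂ) ∘ Real.sqrt ∘ p)) := by
      rw [Matrix.trace_mul_cycle]
      have hUUc' : (star (hA1.1.eigenvectorUnitary : Matrix A A ℂ))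
          * (hA1.1.eigenvectorUnitary : Matrix A A ℂ) = 1 := by
        rw [Matrix.star_eq_conjTranspose]
        exact hUU
      rw [hUUc', Matrix.one_mul]
      rfl
    rw [h0, h1, Matrix.trace_diagonal]
    rw [htdef]
    rw [Complex.re_sum]
    exact Finset.sum_congr rfl fun a _ => by simp
  set c : A → B → C → ℂ :=
    fun a b γ => ∑ α, ∑ β, conj (U α a) * conj (V β b) * ψ ((α, β), γ) with hcdef
  have hGram : ∀ a b a' b', ∑ γ, c a b γ * conj (c a' b' γ)
      = (if a = a' then (p a : ℂ) else 0) * (if b = b' then (q b : ℂ) else 0) :=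
    fun a b a' b' => gram_c ψ ρA ρB U V p q hψ hdAe hdBe a b a' b'
  have hQuad : ∀ x : A × C → ℂ, star x ⬝ᵥ (redAC ψ *ᵥ x)
      = ∑ b, ((Complex.normSq (∑ a, ∑ i : A × C, conj (x i) * (U i.1 a * c a b i.2)) : ℝ) : ℂ) :=
    fun x => quad_redAC ψ U V c hRowU hRowV (fun _ _ _ => rfl) x
  have hc0 : ∀ a b, p a = 0 → ∀ γ, c a b γ = 0 := by
    intro a b ha γ
    have h := hGram a b a b
    rw [if_pos rfl, if_pos rfl, ha] at h
    simp_rw [Complex.mul_conj] at h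
    rw [← Complex.ofReal_sum] at h
    norm_num at h
    have h2 : ∑ γ', Complex.normSq (c a b γ') = 0 := by exact_mod_cast h
    have h3 := (Finset.sum_eq_zero_iff_of_nonneg
      (fun γ' _ => Complex.normSq_nonneg (c a b γ'))).mp h2 γ (Finset.mem_univ γ)
    exact Complex.normSq_eq_zero.mp h3
  set S : Set ℝ := {l : ℝ | ∃ σ : Matrix C C ℂ, IsDensity σ ∧
      (((2 : ℝ) ^ l : ℝ) • ((1 : Matrix A A ℂ) ⊗ₖ σ) - redAC ψ).PosSemidef} with hS
  -- the candidate optimal sigma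
  set σ0 : Matrix C C ℂ := Matrix.of fun γ γ' =>
    ((t⁻¹ : ℝ) : ℂ) * ∑ k : A × B, (((Real.sqrt (p k.1))⁻¹ : ℝ) : ℂ)
      * (c k.1 k.2 γ * conj (c k.1 k.2 γ')) with hσ0def
  have hσ0entry : ∀ γ γ', σ0 γ γ' = ((t⁻¹ : ℝ) : ℂ) * ∑ k : A × B,
      (((Real.sqrt (p k.1))⁻¹ : ℝ) : ℂ) * (c k.1 k.2 γ * conj (c k.1 k.2 γ')) :=
    fun γ γ' => rfl
  have hquadσ0 : ∀ z : C → ℂ, ∑ γ, ∑ γ', conj (z γ) * σ0 γ γ' * z γ'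
      = ((t⁻¹ * ∑ k : A × B, (Real.sqrt (p k.1))⁻¹
          * Complex.normSq (∑ γ, conj (z γ) * c k.1 k.2 γ) : ℝ) : ℂ) := by
    intro z
    have h1 : ∀ γ γ', conj (z γ) * σ0 γ γ' * z γ'
        = ((t⁻¹ : ℝ) : ℂ) * (conj (z γ) * (∑ k : A × B,
            (((Real.sqrt (p k.1))⁻¹ : ℝ) : ℂ) * (c k.1 k.2 γ * conj (c k.1 k.2 γ'))) * z γ') := by
      intro γ γ'
      rw [hσ0entry]
      ring
    simp_rw [h1, ← Finset.mul_sum]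
    rw [quad_gram_w (fun k : A × B => c k.1 k.2) (fun k : A × B => (Real.sqrt (p k.1))⁻¹) z]
    rw [← Complex.ofReal_sum, ← Complex.ofReal_mul]
  have hσ0herm : σ0.IsHermitian := by
    apply Matrix.IsHermitian.ext
    intro γ γ'
    rw [Complex.star_def, hσ0entry, hσ0entry]
    rw [_root_.map_mul, Complex.conj_ofReal, map_sum]
    congr 1
    refine Finset.sum_congr rfl fun k _ => ?_
    rw [_root_.map_mul, Complex.conj_ofReal, _root_.map_mul, Complex.conj_conj]
    ring
  have hσ0psd : σ0.PosSemidef := by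
    refine Matrix.PosSemidef.of_dotProduct_mulVec_nonneg hσ0herm fun z => ?_
    rw [quad_expand, hquadσ0]
    rw [Complex.zero_le_real]
    apply mul_nonneg (inv_nonneg.mpr htpos.le)
    refine Finset.sum_nonneg fun k _ => mul_nonneg (inv_nonneg.mpr (Real.sqrt_nonneg _))
      (Complex.normSq_nonneg _)
  have hσ0tr : σ0.trace = 1 := by
    have h1 : σ0.trace = ∑ γ, σ0 γ γ := rfl
    rw [h1]
    simp_rw [hσ0entry]
    rw [← Finset.mul_sum, Finset.sum_comm]
    have h2 : ∀ k : A × B, ∑ γ, (((Real.sqrt (p k.1))⁻¹ : ℝ) : ℂ)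
        * (c k.1 k.2 γ * conj (c k.1 k.2 γ))
        = ((Real.sqrt (p k.1) * q k.2 : ℝ) : ℂ) := by
      intro k
      rw [← Finset.mul_sum, hGram, if_pos rfl, if_pos rfl]
      push_cast
      rw [← mul_assoc]
      congr 1
      exact_mod_cast congrArg (fun r : ℝ => (r : ℂ)) (inv_sqrt_mul_self' (x := p k.1))
    simp_rw [h2]
    rw [← Complex.ofReal_sum, Fintype.sum_prod_type]
    have h3 : ∑ a, ∑ b, Real.sqrt (p a) * q b = t := by
      have : ∀ a, ∑ b, Real.sqrt (p a) * q b = Real.sqrt (p a) := by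
        intro a
        rw [← Finset.mul_sum, htrB, mul_one]
      simp_rw [this]
      exact htdef.symm
    rw [h3, ← Complex.ofReal_mul, inv_mul_cancel₀ htpos.ne', Complex.ofReal_one]
  have hmem : Real.logb 2 (t ^ 2) ∈ S := by
    have h2l : ((2 : ℝ) ^ (Real.logb 2 (t ^ 2)) : ℝ) = t ^ 2 :=
      Real.rpow_logb (by norm_num) (by norm_num) (by positivity)
    refine ⟨σ0, ⟨hσ0psd, hσ0tr⟩, ?_⟩
    rw [h2l]
    refine Matrix.PosSemidef.of_dotProduct_mulVec_nonneg ?_ ?_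
    · -- hermitian
      apply Matrix.IsHermitian.sub
      · apply Matrix.IsHermitian.ext
        intro i j
        rw [Complex.star_def]
        have hker : ∀ (i j : A × C), ((t ^ 2 : ℝ) • ((1 : Matrix A A ℂ) ⊗ₖ σ0)) i j
            = ((t ^ 2 : ℝ) : ℂ) * ((1 : Matrix A A ℂ) i.1 j.1 * σ0 i.2 j.2) := by
          intro i j
          simp [Matrix.smul_apply, Complex.real_smul]
        rw [hker, hker]
        rw [_root_.map_mul, Complex.conj_ofReal, _root_.map_mul]
        congr 1
        congr 1
        · rw [Matrix.one_apply, Matrix.one_apply]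
          by_cases h : i.1 = j.1
          · simp [h]
          · simp [h, Ne.symm h]
        · exact congrFun (congrFun hσ0herm i.2) j.2
      · apply Matrix.IsHermitian.ext
        intro i j
        rw [Complex.star_def]
        have hred : ∀ (i j : A × C), redAC ψ i j
            = ∑ b, ψ ((i.1, b), i.2) * conj (ψ ((j.1, b), j.2)) := fun _ _ => rfl
        rw [hred, hred, map_sum]
        refine Finset.sum_congr rfl fun b _ => ?_
        rw [_root_.map_mul, Complex.conj_conj]
        ring
    · -- quadratic form
      intro x
      rw [Matrix.sub_mulVec, dotProduct_sub, hQuad x, Matrix.smul_mulVec,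
        dotProduct_smul, quad_one_kron σ0 x]
      have hinner : ∀ α, ∑ γ, ∑ γ', conj (x (α, γ)) * σ0 γ γ' * x (α, γ')
          = ((t⁻¹ * ∑ k : A × B, (Real.sqrt (p k.1))⁻¹
              * Complex.normSq (∑ γ, conj (x (α, γ)) * c k.1 k.2 γ) : ℝ) : ℂ) :=
        fun α => hquadσ0 (fun γ => x (α, γ))
      simp_rw [hinner]
      rw [← Complex.ofReal_sum, Complex.real_smul, ← Complex.ofReal_mul,
        ← Complex.ofReal_sum, ← Complex.ofReal_sub, Complex.zero_le_real, sub_nonneg]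
      -- now a purely real inequality
      have hU1 : ∀ a, ∑ α, Complex.normSq (U α a) = 1 := by
        intro a
        have h := hGramU a a
        rw [if_pos rfl] at h
        have h2 : ∑ α, ((Complex.normSq (U α a) : ℝ) : ℂ) = ((1 : ℝ) : ℂ) := by
          push_cast
          rw [← h]
          exact Finset.sum_congr rfl fun α _ => by rw [mul_comm, Complex.mul_conj]
        rw [← Complex.ofReal_sum] at h2
        exact_mod_cast h2
      have he_eq : ∀ (a : A) (b : B), (∑ i : A × C, conj (x i) * (U i.1 a * c a b i.2))
          = ∑ α, U α a * (∑ γ, conj (x (α, γ)) * c a b γ) := by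
        intro a b
        rw [Fintype.sum_prod_type]
        refine Finset.sum_congr rfl fun α _ => ?_
        rw [Finset.mul_sum]
        exact Finset.sum_congr rfl fun γ _ => by ring
      have he_le : ∀ (a : A) (b : B),
          Complex.normSq (∑ i : A × C, conj (x i) * (U i.1 a * c a b i.2))
          ≤ ∑ α, Complex.normSq (∑ γ, conj (x (α, γ)) * c a b γ) := by
        intro a b
        rw [he_eq]
        calc Complex.normSq (∑ α, U α a * (∑ γ, conj (x (α, γ)) * c a b γ))
            ≤ (∑ α, Complex.normSq (U α a))
              * ∑ α, Complex.normSq (∑ γ, conj (x (α, γ)) * c a b γ) := cs_basic _ _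
          _ = _ := by rw [hU1, one_mul]
      have he0 : ∀ (a : A) (b : B), p a = 0
          → (∑ i : A × C, conj (x i) * (U i.1 a * c a b i.2)) = 0 := by
        intro a b ha
        refine Finset.sum_eq_zero fun i _ => ?_
        rw [hc0 a b ha i.2]
        ring
      have hwcs : ∀ b : B,
          Complex.normSq (∑ a, ∑ i : A × C, conj (x i) * (U i.1 a * c a b i.2))
          ≤ t * ∑ a, (Real.sqrt (p a))⁻¹
              * Complex.normSq (∑ i : A × C, conj (x i) * (U i.1 a * c a b i.2)) := by
        intro b
        have h := weighted_cs p (fun a => ∑ i : A × C, conj (x i) * (U i.1 a * c a b i.2))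
          hpnn (fun a ha => he0 a b ha)
        rwa [← htdef] at h
      calc ∑ b, Complex.normSq (∑ a, ∑ i : A × C, conj (x i) * (U i.1 a * c a b i.2))
          ≤ ∑ b, (t * ∑ a, (Real.sqrt (p a))⁻¹
              * Complex.normSq (∑ i : A × C, conj (x i) * (U i.1 a * c a b i.2))) :=
            Finset.sum_le_sum fun b _ => hwcs b
        _ ≤ ∑ b, (t * ∑ a, (Real.sqrt (p a))⁻¹
              * ∑ α, Complex.normSq (∑ γ, conj (x (α, γ)) * c a b γ)) := by
            refine Finset.sum_le_sum fun b _ => ?_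
            refine mul_le_mul_of_nonneg_left ?_ htpos.le
            refine Finset.sum_le_sum fun a _ => ?_
            exact mul_le_mul_of_nonneg_left (he_le a b) (inv_nonneg.mpr (Real.sqrt_nonneg _))
        _ = t ^ 2 * ∑ α, (t⁻¹ * ∑ k : A × B, (Real.sqrt (p k.1))⁻¹
              * Complex.normSq (∑ γ, conj (x (α, γ)) * c k.1 k.2 γ)) := by
            rw [← Finset.mul_sum]
            have hre : ∑ b, ∑ a, (Real.sqrt (p a))⁻¹
                  * ∑ α, Complex.normSq (∑ γ, conj (x (α, γ)) * c a b γ)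
                = ∑ α, ∑ k : A × B, (Real.sqrt (p k.1))⁻¹
                  * Complex.normSq (∑ γ, conj (x (α, γ)) * c k.1 k.2 γ) := by
              calc ∑ b, ∑ a, (Real.sqrt (p a))⁻¹
                    * ∑ α, Complex.normSq (∑ γ, conj (x (α, γ)) * c a b γ)
                  = ∑ b, ∑ a, ∑ α, (Real.sqrt (p a))⁻¹
                    * Complex.normSq (∑ γ, conj (x (α, γ)) * c a b γ) := by
                    simp_rw [Finset.mul_sum]
                _ = ∑ α, ∑ a, ∑ b, (Real.sqrt (p a))⁻¹
                    * Complex.normSq (∑ γ, conj (x (α, γ)) * c a b γ) := by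
                    rw [Finset.sum_comm]
                    have hswap : ∀ a : A, ∑ b, ∑ α, (Real.sqrt (p a))⁻¹
                          * Complex.normSq (∑ γ, conj (x (α, γ)) * c a b γ)
                        = ∑ α, ∑ b, (Real.sqrt (p a))⁻¹
                          * Complex.normSq (∑ γ, conj (x (α, γ)) * c a b γ) :=
                      fun a => Finset.sum_comm
                    simp_rw [hswap]
                    exact Finset.sum_comm
                _ = _ := by
                    refine Finset.sum_congr rfl fun α _ => ?_
                    rw [Fintype.sum_prod_type]
            rw [hre, ← Finset.mul_sum, ← mul_assoc]
            congr 1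
            rw [sq, mul_assoc, mul_inv_cancel₀ htpos.ne', mul_one]
        _ = _ := rfl
  have hlb : ∀ l ∈ S, Real.logb 2 (t ^ 2) ≤ l := by
    rintro l ⟨σ, hσden, hPSD⟩
    have hkey : t ^ 2 ≤ (2 : ℝ) ^ l := by
      obtain ⟨N, hN⟩ : ∃ N : Matrix C C ℂ, σ = Nᴴ * N := by
        open scoped MatrixOrder in
        exact CStarAlgebra.nonneg_iff_eq_star_mul_self.mp hσden.1.nonneg
      set w : A × B → C → ℂ := fun k γ =>
        (((Real.sqrt (p k.1 * q k.2))⁻¹ : ℝ) : ℂ) * c k.1 k.2 γ with hwdef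
      set s : A × B → ℝ := fun k =>
        (Real.sqrt (p k.1 * q k.2))⁻¹ * ((Real.sqrt (p k.1 * q k.2))⁻¹ * (p k.1 * q k.2))
        with hsdef
      have hs1 : ∀ k, s k ≤ 1 := by
        intro k
        rw [hsdef]
        dsimp only
        rw [inv_sqrt_mul_inv_sqrt_mul']
        split_ifs <;> norm_num
      have hGramW : ∀ k m : A × B, ∑ γ, w k γ * conj (w m γ)
          = if k = m then ((s k : ℝ) : ℂ) else 0 := by
        intro k m
        have hterm : ∀ γ, w k γ * conj (w m γ)
            = (((Real.sqrt (p k.1 * q k.2))⁻¹ : ℝ) : ℂ)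
              * (((Real.sqrt (p m.1 * q m.2))⁻¹ : ℝ) : ℂ)
              * (c k.1 k.2 γ * conj (c m.1 m.2 γ)) := by
          intro γ
          rw [hwdef]
          dsimp only
          rw [_root_.map_mul, Complex.conj_ofReal]
          ring
        simp_rw [hterm]
        rw [← Finset.mul_sum, hGram]
        by_cases hkm : k = m
        · subst hkm
          rw [if_pos rfl, if_pos rfl, if_pos rfl, hsdef]
          push_cast
          ring
        · rw [if_neg hkm]
          have h1 : k.1 ≠ m.1 ∨ k.2 ≠ m.2 := by
            by_contra hcon
            push_neg at hcon
            exact hkm (Prod.ext hcon.1 hcon.2)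
          rcases h1 with h1 | h1
          · rw [if_neg h1]
            ring
          · rw [if_neg h1]
            ring
      set y : B → (A × C) → ℂ := fun b i => ∑ a', U i.1 a' * w (a', b) i.2 with hydef
      have hconj_y : ∀ (b : B) (i : A × C), conj (y b i)
          = ∑ a', conj (U i.1 a') * conj (w (a', b) i.2) := by
        intro b i
        rw [hydef]
        dsimp only
        rw [map_sum]
        exact Finset.sum_congr rfl fun a' _ => by rw [_root_.map_mul]
      have hwc : ∀ (a : A) (b b' : B), ∑ γ, conj (w (a, b) γ) * c a b' γ
          = if b = b' then ((Real.sqrt (p a * q b) : ℝ) : ℂ) else 0 := by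
        intro a b b'
        have hterm : ∀ γ, conj (w (a, b) γ) * c a b' γ
            = (((Real.sqrt (p a * q b))⁻¹ : ℝ) : ℂ) * (conj (c a b γ) * c a b' γ) := by
          intro γ
          rw [hwdef]
          dsimp only
          rw [_root_.map_mul, Complex.conj_ofReal]
          ring
        simp_rw [hterm]
        rw [← Finset.mul_sum]
        have hsum : ∑ γ, conj (c a b γ) * c a b' γ
            = (if a = a then (p a : ℂ) else 0) * (if b = b' then (q b : ℂ) else 0) := by
          calc ∑ γ, conj (c a b γ) * c a b' γ
              = ∑ γ, conj (c a b γ * conj (c a b' γ)) := by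
                refine Finset.sum_congr rfl fun γ _ => ?_
                rw [_root_.map_mul, Complex.conj_conj]
            _ = conj ((if a = a then (p a : ℂ) else 0) * (if b = b' then (q b : ℂ) else 0)) := by
                rw [← map_sum, hGram]
            _ = _ := by
                rw [_root_.map_mul]
                congr 1 <;> (split_ifs <;> simp [Complex.conj_ofReal])
        rw [hsum, if_pos rfl]
        by_cases hbb : b = b'
        · rw [if_pos hbb, if_pos hbb]
          rw [← Complex.ofReal_mul, ← Complex.ofReal_mul]
          congr 1
          exact_mod_cast inv_sqrt_mul_self' (x := p a * q b)
        · rw [if_neg hbb, if_neg hbb]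
          ring
      have he_y : ∀ (b : B) (a : A) (b' : B),
          (∑ i : A × C, conj (y b i) * (U i.1 a * c a b' i.2))
          = if b = b' then ((Real.sqrt (p a * q b) : ℝ) : ℂ) else 0 := by
        intro b a b'
        have hterm : ∀ i : A × C, conj (y b i) * (U i.1 a * c a b' i.2)
            = ∑ a', (conj (U i.1 a') * U i.1 a) * (conj (w (a', b) i.2) * c a b' i.2) := by
          intro i
          rw [hconj_y, Finset.sum_mul]
          exact Finset.sum_congr rfl fun a' _ => by ring
        simp_rw [hterm]
        calc ∑ i : A × C, ∑ a', (conj (U i.1 a') * U i.1 a) * (conj (w (a', b) i.2) * c a b' i.2)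
            = ∑ a', ∑ i : A × C, (conj (U i.1 a') * U i.1 a)
                * (conj (w (a', b) i.2) * c a b' i.2) := Finset.sum_comm
          _ = ∑ a', (∑ α, conj (U α a') * U α a) * (∑ γ, conj (w (a', b) γ) * c a b' γ) := by
              refine Finset.sum_congr rfl fun a' _ => ?_
              rw [Finset.sum_mul_sum, Fintype.sum_prod_type]
          _ = ∑ γ, conj (w (a, b) γ) * c a b' γ := by
              rw [Finset.sum_eq_single a]
              · rw [hGramU, if_pos rfl, one_mul]
              · intro a' _ ha'
                rw [hGramU, if_neg ha', zero_mul]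
              · intro h; exact absurd (Finset.mem_univ a) h
          _ = _ := hwc a b b'
      have hS2 : ∀ b, star (y b) ⬝ᵥ (redAC ψ *ᵥ (y b)) = ((q b * t ^ 2 : ℝ) : ℂ) := by
        intro b
        rw [hQuad (y b)]
        simp_rw [he_y b]
        have hsplit : ∀ b' : B, (∑ a, if b = b' then ((Real.sqrt (p a * q b) : ℝ) : ℂ) else 0)
            = if b = b' then ((t * Real.sqrt (q b) : ℝ) : ℂ) else 0 := by
          intro b'
          by_cases hbb : b = b'
          · simp only [if_pos hbb]
            rw [← Complex.ofReal_sum]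
            congr 1
            have : ∀ a, Real.sqrt (p a * q b) = Real.sqrt (p a) * Real.sqrt (q b) :=
              fun a => Real.sqrt_mul (hpnn a) _
            simp_rw [this]
            rw [← Finset.sum_mul, htdef]
          · simp only [if_neg hbb]
            simp
        simp_rw [hsplit]
        rw [Finset.sum_eq_single b]
        · rw [if_pos rfl, Complex.normSq_ofReal]
          congr 1
          have := Real.mul_self_sqrt (hqnn b)
          nlinarith [this]
        · intro b' _ hb'
          rw [if_neg (Ne.symm hb')]
          simp
        · intro h; exact absurd (Finset.mem_univ b) h
      have hS1 : ∀ b, star (y b) ⬝ᵥ ((((1 : Matrix A A ℂ) ⊗ₖ σ)) *ᵥ (y b))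
          = ((∑ a, ∑ j, Complex.normSq (∑ γ, conj (w (a, b) γ) * conj (N j γ)) : ℝ) : ℂ) := by
        intro b
        rw [quad_one_kron σ (y b)]
        have hyy : ∀ γ γ', ∑ α, conj (y b (α, γ)) * y b (α, γ')
            = ∑ a, conj (w (a, b) γ) * w (a, b) γ' := by
          intro γ γ'
          have hterm : ∀ α, conj (y b (α, γ)) * y b (α, γ')
              = ∑ a', ∑ a'', (conj (U α a') * U α a'')
                  * (conj (w (a', b) γ) * w (a'', b) γ') := by
            intro α
            rw [hconj_y, hydef]
            dsimp only
            rw [Finset.sum_mul_sum]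
            exact Finset.sum_congr rfl fun a' _ => Finset.sum_congr rfl fun a'' _ => by ring
          simp_rw [hterm]
          calc ∑ α, ∑ a', ∑ a'', (conj (U α a') * U α a'')
                  * (conj (w (a', b) γ) * w (a'', b) γ')
              = ∑ a', ∑ a'', (∑ α, conj (U α a') * U α a'')
                  * (conj (w (a', b) γ) * w (a'', b) γ') := by
                rw [Finset.sum_comm]
                refine Finset.sum_congr rfl fun a' _ => ?_
                rw [Finset.sum_comm]
                exact Finset.sum_congr rfl fun a'' _ => (Finset.sum_mul _ _ _).symm
            _ = ∑ a', conj (w (a', b) γ) * w (a', b) γ' := by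
                refine Finset.sum_congr rfl fun a' _ => ?_
                rw [Finset.sum_eq_single a']
                · rw [hGramU, if_pos rfl, one_mul]
                · intro a'' _ ha''
                  rw [hGramU, if_neg (Ne.symm ha''), zero_mul]
                · intro h; exact absurd (Finset.mem_univ a') h
        have hswap : ∑ α, ∑ γ, ∑ γ', conj (y b (α, γ)) * σ γ γ' * y b (α, γ')
            = ∑ a, ∑ γ, ∑ γ', conj (w (a, b) γ) * σ γ γ' * w (a, b) γ' := by
          calc ∑ α, ∑ γ, ∑ γ', conj (y b (α, γ)) * σ γ γ' * y b (α, γ')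
              = ∑ γ, ∑ γ', σ γ γ' * ∑ α, conj (y b (α, γ)) * y b (α, γ') := by
                rw [Finset.sum_comm]
                refine Finset.sum_congr rfl fun γ _ => ?_
                rw [Finset.sum_comm]
                refine Finset.sum_congr rfl fun γ' _ => ?_
                rw [Finset.mul_sum]
                exact Finset.sum_congr rfl fun α _ => by ring
            _ = ∑ γ, ∑ γ', σ γ γ' * ∑ a, conj (w (a, b) γ) * w (a, b) γ' := by
                simp_rw [hyy]
            _ = ∑ γ, ∑ γ', ∑ a, conj (w (a, b) γ) * σ γ γ' * w (a, b) γ' := by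
                refine Finset.sum_congr rfl fun γ _ => Finset.sum_congr rfl fun γ' _ => ?_
                rw [Finset.mul_sum]
                exact Finset.sum_congr rfl fun a _ => by ring
            _ = ∑ γ, ∑ a, ∑ γ', conj (w (a, b) γ) * σ γ γ' * w (a, b) γ' :=
                Finset.sum_congr rfl fun γ _ => Finset.sum_comm
            _ = ∑ a, ∑ γ, ∑ γ', conj (w (a, b) γ) * σ γ γ' * w (a, b) γ' :=
                Finset.sum_comm
        rw [hswap]
        have hentry : ∀ γ γ', σ γ γ'
            = ∑ j, ((1 : ℝ) : ℂ) * (conj (N j γ) * conj (conj (N j γ'))) := by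
          intro γ γ'
          rw [hN]
          rw [Matrix.mul_apply]
          refine Finset.sum_congr rfl fun j _ => ?_
          rw [Matrix.conjTranspose_apply, Complex.conj_conj, Complex.ofReal_one, one_mul,
            Complex.star_def]
        have hper : ∀ a, ∑ γ, ∑ γ', conj (w (a, b) γ) * σ γ γ' * w (a, b) γ'
            = ∑ j, ((Complex.normSq (∑ γ, conj (w (a, b) γ) * conj (N j γ)) : ℝ) : ℂ) := by
          intro a
          simp_rw [hentry]
          rw [quad_gram_w (fun j γ => conj (N j γ)) (fun _ => (1 : ℝ)) (w (a, b))]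
          simp
        simp_rw [hper]
        push_cast
        rfl
      have hposb : ∀ b, q b * t ^ 2 ≤ (2 : ℝ) ^ l
          * (∑ a, ∑ j, Complex.normSq (∑ γ, conj (w (a, b) γ) * conj (N j γ))) := by
        intro b
        have h := hPSD.dotProduct_mulVec_nonneg (y b)
        rw [Matrix.sub_mulVec, dotProduct_sub, Matrix.smul_mulVec, dotProduct_smul,
          hS1 b, hS2 b, Complex.real_smul, ← Complex.ofReal_mul, ← Complex.ofReal_sub,
          Complex.zero_le_real, sub_nonneg] at h
        exact h
      have hNtr : ∑ j, ∑ γ, Complex.normSq (N j γ) = 1 := by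
        have h1 : σ.trace = ∑ γ, ∑ j, ((Complex.normSq (N j γ) : ℝ) : ℂ) := by
          have h2 : σ.trace = ∑ γ, σ γ γ := rfl
          rw [h2]
          refine Finset.sum_congr rfl fun γ _ => ?_
          rw [hN, Matrix.mul_apply]
          refine Finset.sum_congr rfl fun j _ => ?_
          rw [Matrix.conjTranspose_apply, Complex.star_def, mul_comm, Complex.mul_conj]
        rw [hσden.2, Finset.sum_comm] at h1
        have h3 : ((1 : ℝ) : ℂ) = ((∑ j, ∑ γ, Complex.normSq (N j γ) : ℝ) : ℂ) := by
          push_cast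
          exact h1
        exact_mod_cast h3.symm
      have htot : ∑ b, ∑ a, ∑ j, Complex.normSq (∑ γ, conj (w (a, b) γ) * conj (N j γ))
          ≤ 1 := by
        have hre : ∑ b, ∑ a, ∑ j, Complex.normSq (∑ γ, conj (w (a, b) γ) * conj (N j γ))
            = ∑ j, ∑ k : A × B, Complex.normSq (∑ γ, conj (w k γ) * conj (N j γ)) := by
          calc ∑ b, ∑ a, ∑ j, Complex.normSq (∑ γ, conj (w (a, b) γ) * conj (N j γ))
              = ∑ a, ∑ b, ∑ j, Complex.normSq (∑ γ, conj (w (a, b) γ) * conj (N j γ)) :=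
                Finset.sum_comm
            _ = ∑ a, ∑ j, ∑ b, Complex.normSq (∑ γ, conj (w (a, b) γ) * conj (N j γ)) := by
                exact Finset.sum_congr rfl fun a _ => Finset.sum_comm
            _ = ∑ j, ∑ a, ∑ b, Complex.normSq (∑ γ, conj (w (a, b) γ) * conj (N j γ)) :=
                Finset.sum_comm
            _ = _ := by
                refine Finset.sum_congr rfl fun j _ => ?_
                rw [Fintype.sum_prod_type]
        rw [hre]
        calc ∑ j, ∑ k : A × B, Complex.normSq (∑ γ, conj (w k γ) * conj (N j γ))
            ≤ ∑ j, ∑ γ, Complex.normSq (conj (N j γ)) :=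
              Finset.sum_le_sum fun j _ => bessel w s hs1 hGramW (fun γ => conj (N j γ))
          _ = ∑ j, ∑ γ, Complex.normSq (N j γ) := by
              simp [Complex.normSq_conj]
          _ = 1 := hNtr
      have hfin : ∑ b, (q b * t ^ 2) ≤ (2 : ℝ) ^ l
          * ∑ b, ∑ a, ∑ j, Complex.normSq (∑ γ, conj (w (a, b) γ) * conj (N j γ)) := by
        rw [Finset.mul_sum]
        exact Finset.sum_le_sum fun b _ => hposb b
      have hql : ∑ b, (q b * t ^ 2) = t ^ 2 := by
        rw [← Finset.sum_mul, htrB, one_mul]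
      have hp2 : (0 : ℝ) < (2 : ℝ) ^ l := Real.rpow_pos_of_pos (by norm_num) l
      calc t ^ 2 = ∑ b, (q b * t ^ 2) := hql.symm
        _ ≤ (2 : ℝ) ^ l
            * ∑ b, ∑ a, ∑ j, Complex.normSq (∑ γ, conj (w (a, b) γ) * conj (N j γ)) := hfin
        _ ≤ (2 : ℝ) ^ l * 1 := by
            exact mul_le_mul_of_nonneg_left htot hp2.le
        _ = (2 : ℝ) ^ l := mul_one _
    have h2 : Real.logb 2 (t ^ 2) ≤ Real.logb 2 ((2 : ℝ) ^ l) :=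
      (Real.logb_le_logb one_lt_two (by positivity) (by positivity)).mpr hkey
    rwa [Real.logb_rpow (by norm_num) (by norm_num)] at h2
  have hInf : sInf S = Real.logb 2 (t ^ 2) :=
    le_antisymm (csInf_le ⟨_, fun l hl => hlb l hl⟩ hmem) (le_csInf ⟨_, hmem⟩ hlb)
  have hHmin : Hmin (redAC ψ) = - sInf S := by rw [hS]; rfl
  rw [hHmin, neg_neg, hInf, htr_sqrt]
  rw [Real.logb_pow]
  norm_num

end
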